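/- Let u : ℝ^d → ℝ be differentiable with ⟨∇u(x) − ∇u(y), x − y⟩ ≥ −L(1 + |x|^l + |y|^l)|x − y|² for all x, y, and let u_{r,λ}(x) = u(x) + λ|x|^{2r+2} with λ > 0 and 2r > l. Then ⟨∇u_{r,λ}(x) − ∇u_{r,λ}(y), x − y⟩ ≥ (λ(r+1)(|x|^{2r} + |y|^{2r}) − L(|x|^l + |y|^l) − L)|x − y|² for all x, y ∈ ℝ^d. -/

import Mathlib

open scoped RealInnerProductSpace

section Aux

variable {E : Type*} [NormedAddCommGroup E] [InnerProductSpace ℝ E] [CompleteSpace E]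

lemma aux_inner_rpow (a s : ℝ) (ha : 0 ≤ a) (hs : 0 ≤ s) (x y : E) :
    ⟪(a * ‖x‖ ^ s) • x - (a * ‖y‖ ^ s) • y, x - y⟫ ≥
      a / 2 * (‖x‖ ^ s + ‖y‖ ^ s) * ‖x - y‖ ^ 2 := by
  have key : (‖x‖ ^ s - ‖y‖ ^ s) * (‖x‖ ^ 2 - ‖y‖ ^ 2) ≥ 0 := by
    rcases le_total ‖x‖ ‖y‖ with h | h
    · have h1 : ‖x‖ ^ s ≤ ‖y‖ ^ s := Real.rpow_le_rpow (norm_nonneg x) h hs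
      have h2 : ‖x‖ ^ 2 ≤ ‖y‖ ^ 2 := pow_le_pow_left₀ (norm_nonneg x) h 2
      nlinarith
    · have h1 : ‖y‖ ^ s ≤ ‖x‖ ^ s := Real.rpow_le_rpow (norm_nonneg y) h hs
      have h2 : ‖y‖ ^ 2 ≤ ‖x‖ ^ 2 := pow_le_pow_left₀ (norm_nonneg y) h 2
      nlinarith
  have expand : ⟪(a * ‖x‖ ^ s) • x - (a * ‖y‖ ^ s) • y, x - y⟫ =
      a * ‖x‖ ^ s * ‖x‖ ^ 2 + a * ‖y‖ ^ s * ‖y‖ ^ 2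
        - (a * ‖x‖ ^ s + a * ‖y‖ ^ s) * ⟪x, y⟫ := by
    simp only [inner_sub_left, inner_sub_right, real_inner_smul_left,
      real_inner_self_eq_norm_sq, real_inner_comm y x]
    ring
  rw [expand, norm_sub_sq_real]
  nlinarith [key, ha]

lemma aux_gradient_rpow (lam p : ℝ) (hp : 1 < p) (z : E) :
    HasGradientAt (fun w : E => lam * ‖w‖ ^ p) ((lam * p * ‖z‖ ^ (p - 2)) • z) z := by
  have h1 : HasFDerivAt (fun w : E => lam * ‖w‖ ^ p)
      (lam • ((p * ‖z‖ ^ (p - 2)) • innerSL ℝ z)) z :=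
    (hasFDerivAt_norm_rpow z hp).const_mul lam
  rw [hasGradientAt_iff_hasFDerivAt]
  refine h1.congr_fderiv ?_
  ext w
  simp [InnerProductSpace.toDual_apply_apply, real_inner_smul_left]
  ring

end Aux

theorem regularized_potential_monotonicity (d : ℕ)
    (u : EuclideanSpace ℝ (Fin d) → ℝ)
    (g greg : EuclideanSpace ℝ (Fin d) → EuclideanSpace ℝ (Fin d))
    (L l r lam : ℝ) (hL : 0 < L) (hl : 0 < l) (hlam : 0 < lam)
    (hr : l < 2 * r)
    (hgrad : ∀ x, HasGradientAt u (g x) x)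
    (hmono : ∀ x y, ⟪g x - g y, x - y⟫ ≥ -L * (1 + ‖x‖ ^ l + ‖y‖ ^ l) * ‖x - y‖ ^ 2)
    (hgreg : ∀ x, HasGradientAt (fun z => u z + lam * ‖z‖ ^ (2 * r + 2)) (greg x) x) :
    ∀ x y, ⟪greg x - greg y, x - y⟫
      ≥ (lam * (r + 1) * (‖x‖ ^ (2 * r) + ‖y‖ ^ (2 * r))
          - L * (‖x‖ ^ l + ‖y‖ ^ l) - L) * ‖x - y‖ ^ 2 := by
  have hr0 : 0 < r := by linarith
  have hp : (1 : ℝ) < 2 * r + 2 := by linarith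
  have key : ∀ z, greg z = g z + (lam * (2 * r + 2) * ‖z‖ ^ (2 * r)) • z := by
    intro z
    have h2 : HasGradientAt (fun w : EuclideanSpace ℝ (Fin d) => lam * ‖w‖ ^ (2 * r + 2))
        ((lam * (2 * r + 2) * ‖z‖ ^ (2 * r)) • z) z := by
      have := aux_gradient_rpow lam (2 * r + 2) hp z
      have he : 2 * r + 2 - 2 = 2 * r := by ring
      rwa [he] at this
    have h3 : HasGradientAt (fun w => u w + lam * ‖w‖ ^ (2 * r + 2))
        (g z + (lam * (2 * r + 2) * ‖z‖ ^ (2 * r)) • z) z := by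
      rw [hasGradientAt_iff_hasFDerivAt]
      have := (hgrad z).hasFDerivAt.add h2.hasFDerivAt
      rw [map_add]
      exact this
    exact (hgreg z).unique h3
  intro x y
  have e : greg x - greg y = (g x - g y) +
      ((lam * (2 * r + 2) * ‖x‖ ^ (2 * r)) • x - (lam * (2 * r + 2) * ‖y‖ ^ (2 * r)) • y) := by
    rw [key x, key y]; abel
  rw [e, inner_add_left]
  have h4 := hmono x y
  have h5 := aux_inner_rpow (lam * (2 * r + 2)) (2 * r) (by positivity) (by positivity) x y
  nlinarith [h4, h5]
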